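/- Let x = (x_n) be a sequence taking values in a separable metric space. Then λ({ω ∈ (0,1] : Γ_x(Fin) = Γ_{x↾ω}(Fin)}) = 1, where Fin is the ideal of finite subsets of ℕ; that is, the set of ordinary limit points (cluster points) of x is equal to the set of ordinary limit points of almost all its subsequences, in the sense of Lebesgue measure. -/

import Mathlib

open Filter Topology MeasureTheory Set

/-- The canonical (increasing) enumeration of a set of natural numbers. -/
noncomputable def enumOf (A : Set ℕ) : ℕ → ℕ := Nat.nth (· ∈ A)

/-- `idxSet A B` is the set `A_B = {a_b : b ∈ B}`, where `{a_n}` is the canonical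
enumeration of `A`. -/
noncomputable def idxSet (A B : Set ℕ) : Set ℕ := enumOf A '' B

/-- `seqLE X Y` means `X ≤ Y`, i.e. `x_n ≤ y_n` for all `n`, for the canonical
enumerations `{x_n}` of `X` and `{y_n}` of `Y`. -/
def seqLE (X Y : Set ℕ) : Prop := ∀ n, enumOf X n ≤ enumOf Y n

/-- `A` has asymptotic density `c`: `|A ∩ [1,n]| / n → c`. -/
def HasDensity (A : Set ℕ) (c : ℝ) : Prop :=
  Tendsto (fun n : ℕ => ((A ∩ Set.Icc 1 n).ncard : ℝ) / n) atTop (𝓝 c)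

/-- An ideal on ℕ: closed under finite unions and subsets, contains all finite sets,
and is not the whole power set. -/
def IsIdeal (I : Set (Set ℕ)) : Prop :=
  (∀ A B : Set ℕ, A ∈ I → B ∈ I → A ∪ B ∈ I) ∧
  (∀ A B : Set ℕ, A ⊆ B → B ∈ I → A ∈ I) ∧
  (∀ A : Set ℕ, A.Finite → A ∈ I) ∧
  Set.univ ∉ I

/-- `I` is weakly thinnable: `A_B ∉ I` whenever `A` admits non-zero asymptotic density
and `B ∉ I`. -/
def WeaklyThinnable (I : Set (Set ℕ)) : Prop :=
  ∀ A B : Set ℕ, (∃ c : ℝ, c ≠ 0 ∧ HasDensity A c) → B ∉ I → idxSet A B ∉ I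

/-- `I` is thinnable: weakly thinnable, `B_A ∉ I` whenever `A` admits non-zero asymptotic
density and `B ∉ I`, and `X ∉ I` whenever `X ≤ Y` and `Y ∉ I`. -/
def Thinnable (I : Set (Set ℕ)) : Prop :=
  WeaklyThinnable I ∧
  (∀ A B : Set ℕ, (∃ c : ℝ, c ≠ 0 ∧ HasDensity A c) → B ∉ I → idxSet B A ∉ I) ∧
  (∀ X Y : Set ℕ, X.Infinite → Y.Infinite → seqLE X Y → Y ∉ I → X ∉ I)

/-- `I` is strechable: `kA ∉ I` for all (positive) `k` and all `A ∉ I`. -/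
def Strechable (I : Set (Set ℕ)) : Prop :=
  ∀ k : ℕ, 0 < k → ∀ A : Set ℕ, A ∉ I → (fun a => k * a) '' A ∉ I

/-- The digit `d_{i+1}(ω)` of the non-terminating dyadic expansion of `ω ∈ (0,1]`
(digits are indexed from `0` to match `0`-indexed sequences). -/
noncomputable def dyadicDigit (ω : ℝ) (i : ℕ) : ℤ :=
  ⌈(2 : ℝ) ^ (i + 1) * ω⌉ - 2 * ⌈(2 : ℝ) ^ i * ω⌉ + 1

/-- The set of indices kept when passing to the subsequence `x ↾ ω`. -/
def keepSet (ω : ℝ) : Set ℕ := {i | dyadicDigit ω i = 1}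

/-- The subsequence `x ↾ ω` of `x`, keeping `x_i` exactly when `d_i(ω) = 1`. -/
noncomputable def subseq {X : Type*} (x : ℕ → X) (ω : ℝ) : ℕ → X :=
  fun n => x (enumOf (keepSet ω) n)

/-- `ω` is a normal number: `(1/n) ∑_{i=1}^n d_i(ω) → 1/2`. -/
def IsNormal (ω : ℝ) : Prop :=
  Tendsto (fun n : ℕ => (∑ i ∈ Finset.range n, (dyadicDigit ω i : ℝ)) / n) atTop (𝓝 (1 / 2))

/-- `Γ_x(I)`: the set of `I`-cluster points of the sequence `x`. -/
def clusterPts {X : Type*} [TopologicalSpace X] (I : Set (Set ℕ)) (x : ℕ → X) : Set X :=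
  {l | ∀ U ∈ 𝓝 l, {n | x n ∈ U} ∉ I}


open scoped ENNReal

section AuxDyadic

lemma ceil_two_mul_le (t : ℝ) : ⌈2 * t⌉ ≤ 2 * ⌈t⌉ := by
  apply Int.ceil_le.mpr
  push_cast
  linarith [Int.le_ceil t]

lemma two_mul_ceil_le (t : ℝ) : 2 * ⌈t⌉ - 1 ≤ ⌈2 * t⌉ := by
  have h1 : (2 * ⌈t⌉ - 2 : ℤ) < ⌈2 * t⌉ := by
    rw [Int.lt_ceil]
    push_cast
    linarith [Int.ceil_lt_add_one t]
  omega

lemma dyadicDigit_zero_or_one (ω : ℝ) (i : ℕ) :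
    dyadicDigit ω i = 0 ∨ dyadicDigit ω i = 1 := by
  have h : (2 : ℝ) ^ (i + 1) * ω = 2 * ((2 : ℝ) ^ i * ω) := by ring
  unfold dyadicDigit
  rw [h]
  have := ceil_two_mul_le ((2 : ℝ) ^ i * ω)
  have := two_mul_ceil_le ((2 : ℝ) ^ i * ω)
  omega

lemma dyadicDigit_double (ω : ℝ) (i : ℕ) :
    dyadicDigit (2 * ω) i = dyadicDigit ω (i + 1) := by
  unfold dyadicDigit
  have h1 : (2 : ℝ) ^ (i + 1) * (2 * ω) = 2 ^ (i + 1 + 1) * ω := by ring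
  have h2 : (2 : ℝ) ^ i * (2 * ω) = 2 ^ (i + 1) * ω := by ring
  rw [h1, h2]

lemma dyadicDigit_double_sub (ω : ℝ) (i : ℕ) :
    dyadicDigit (2 * ω - 1) i = dyadicDigit ω (i + 1) := by
  unfold dyadicDigit
  have h1 : (2 : ℝ) ^ (i + 1) * (2 * ω - 1) = 2 ^ (i + 1 + 1) * ω - ((2 ^ (i + 1) : ℤ) : ℝ) := by
    push_cast; ring
  have h2 : (2 : ℝ) ^ i * (2 * ω - 1) = 2 ^ (i + 1) * ω - ((2 ^ i : ℤ) : ℝ) := by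
    push_cast; ring
  rw [h1, h2, Int.ceil_sub_intCast, Int.ceil_sub_intCast]
  ring

lemma dyadicDigit_zero_iff {ω : ℝ} (hω : ω ∈ Set.Ioc (0 : ℝ) 1) :
    dyadicDigit ω 0 = 0 ↔ ω ≤ 1 / 2 := by
  obtain ⟨h0, h1⟩ := hω
  have hc : ⌈ω⌉ = 1 := by
    have hle : ⌈ω⌉ ≤ 1 := Int.ceil_le.mpr (by exact_mod_cast h1)
    have hlt : 0 < ⌈ω⌉ := Int.lt_ceil.mpr (by exact_mod_cast h0)
    omega
  have he : dyadicDigit ω 0 = ⌈2 * ω⌉ - 1 := by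
    unfold dyadicDigit
    norm_num [hc]
    omega
  rw [he]
  constructor
  · intro h
    have : (2 * ω : ℝ) ≤ ((1 : ℤ) : ℝ) := by
      have : ⌈2 * ω⌉ = 1 := by omega
      calc (2 * ω : ℝ) ≤ ⌈2 * ω⌉ := Int.le_ceil _
        _ = ((1:ℤ):ℝ) := by rw [this]
    push_cast at this
    linarith
  · intro h
    have hle : ⌈2 * ω⌉ ≤ 1 := Int.ceil_le.mpr (by push_cast; linarith)
    have hlt : 0 < ⌈2 * ω⌉ := Int.lt_ceil.mpr (by push_cast; linarith)
    omega

/-- The set of `ω ∈ (0,1]` whose dyadic digits vanish on `F`. -/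
def zeroDigitSet (F : Finset ℕ) : Set ℝ :=
  {ω | ω ∈ Set.Ioc (0 : ℝ) 1 ∧ ∀ i ∈ F, dyadicDigit ω i = 0}

lemma measurable_dyadicDigit (i : ℕ) : Measurable fun ω : ℝ => dyadicDigit ω i := by
  unfold dyadicDigit
  exact (((measurable_const_mul _).ceil.sub
    (measurable_const.mul (measurable_const_mul _).ceil)).add measurable_const)

lemma measurableSet_zeroDigitSet (F : Finset ℕ) : MeasurableSet (zeroDigitSet F) := by
  have : zeroDigitSet F = Set.Ioc (0:ℝ) 1 ∩ ⋂ i ∈ F, {ω | dyadicDigit ω i = 0} := by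
    ext ω; simp [zeroDigitSet]
  rw [this]
  exact measurableSet_Ioc.inter (MeasurableSet.biInter F.countable_toSet
    (fun i _ => (measurable_dyadicDigit i) (measurableSet_singleton 0)))

lemma ofReal_half : ENNReal.ofReal |(2:ℝ)⁻¹| = (2 : ℝ≥0∞)⁻¹ := by
  rw [abs_of_pos (by norm_num)]
  rw [ENNReal.ofReal_inv_of_pos (by norm_num)]
  norm_num

lemma volume_preimage_double (s : Set ℝ) :
    volume ((fun ω : ℝ => 2 * ω) ⁻¹' s) = 2⁻¹ * volume s := by
  have := Real.volume_preimage_mul_left (a := 2) (by norm_num) s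
  rw [show ((2 : ℝ) * ·) = (fun ω : ℝ => 2 * ω) from rfl] at this
  rw [this, ofReal_half]

lemma volume_preimage_double_sub (s : Set ℝ) :
    volume ((fun ω : ℝ => 2 * ω - 1) ⁻¹' s) = 2⁻¹ * volume s := by
  have hcomp : (fun ω : ℝ => 2 * ω - 1) ⁻¹' s
      = (fun ω : ℝ => 2 * ω) ⁻¹' ((fun y : ℝ => -1 + y) ⁻¹' s) := by
    ext ω; simp [sub_eq_neg_add]
  rw [hcomp, volume_preimage_double]
  congr 1
  exact measure_preimage_add volume (-1) s

lemma volume_zeroDigitSet (F : Finset ℕ) :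
    volume (zeroDigitSet F) = (2 : ℝ≥0∞)⁻¹ ^ F.card := by
  suffices h : ∀ (n : ℕ) (F : Finset ℕ), F.sum id + F.card ≤ n →
      volume (zeroDigitSet F) = (2 : ℝ≥0∞)⁻¹ ^ F.card from
    h (F.sum id + F.card) F le_rfl
  intro n
  induction n with
  | zero =>
    intro F hF
    have : F = ∅ := Finset.card_eq_zero.mp (by omega)
    subst this
    have he : zeroDigitSet ∅ = Set.Ioc (0:ℝ) 1 := by ext ω; simp [zeroDigitSet]
    rw [he, Real.volume_Ioc]
    norm_num
  | succ n ih =>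
    intro F hF
    rcases F.eq_empty_or_nonempty with rfl | hne
    · have he : zeroDigitSet ∅ = Set.Ioc (0:ℝ) 1 := by ext ω; simp [zeroDigitSet]
      rw [he, Real.volume_Ioc]
      norm_num
    have hcard : 1 ≤ F.card := Finset.card_pos.mpr hne
    by_cases h0 : 0 ∈ F
    · -- `G = (F.erase 0).image (· - 1)`
      set G := (F.erase 0).image (· - 1) with hG
      have hinj : Set.InjOn (· - 1) (F.erase 0 : Set ℕ) := by
        intro a ha b hb hab
        simp only [Finset.coe_erase, Set.mem_diff, Finset.mem_coe] at ha hb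
        have ha1 : 1 ≤ a := by
          rcases Nat.eq_zero_or_pos a with h | h
          · exact absurd h (by simpa using ha.2)
          · exact h
        have hb1 : 1 ≤ b := by
          rcases Nat.eq_zero_or_pos b with h | h
          · exact absurd h (by simpa using hb.2)
          · exact h
        have hab' : a - 1 = b - 1 := hab
        omega
      have hGcard : G.card = F.card - 1 := by
        rw [hG, Finset.card_image_of_injOn hinj, Finset.card_erase_of_mem h0]
      have hset : zeroDigitSet F = (fun ω : ℝ => 2 * ω) ⁻¹' zeroDigitSet G := by
        ext ω
        simp only [zeroDigitSet, Set.mem_setOf_eq, Set.mem_preimage, Set.mem_Ioc]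
        constructor
        · rintro ⟨⟨hω0, hω1⟩, hd⟩
          have hhalf : ω ≤ 1 / 2 := (dyadicDigit_zero_iff ⟨hω0, hω1⟩).mp (hd 0 h0)
          refine ⟨⟨by linarith, by linarith⟩, ?_⟩
          intro j hj
          rw [hG] at hj
          obtain ⟨i, hi, rfl⟩ := Finset.mem_image.mp hj
          have hi1 : 1 ≤ i := by
            have := Finset.mem_erase.mp hi
            omega
          rw [dyadicDigit_double]
          have : i - 1 + 1 = i := by omega
          rw [this]
          exact hd i (Finset.mem_erase.mp hi).2
        · rintro ⟨⟨hω0, hω1⟩, hd⟩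
          have hω0' : 0 < ω := by linarith
          have hωh : ω ≤ 1 / 2 := by linarith
          refine ⟨⟨hω0', by linarith⟩, ?_⟩
          intro i hi
          rcases Nat.eq_zero_or_pos i with rfl | hi1
          · exact (dyadicDigit_zero_iff ⟨hω0', by linarith⟩).mpr hωh
          · have : i - 1 ∈ G := Finset.mem_image.mpr ⟨i, Finset.mem_erase.mpr ⟨by omega, hi⟩, rfl⟩
            have hh := hd (i - 1) this
            rw [dyadicDigit_double] at hh
            rwa [show i - 1 + 1 = i by omega] at hh
      have hGm : G.sum id + G.card ≤ n := by
        have h1 : G.sum id = (F.erase 0).sum (fun i => i - 1) := by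
          rw [hG]; exact Finset.sum_image (fun a ha b hb h => hinj ha hb h)
        have h2 : G.card = (F.erase 0).card := by
          rw [hG]; exact Finset.card_image_of_injOn hinj
        have h3 : G.sum id + G.card = (F.erase 0).sum (fun i => (i - 1) + 1) := by
          rw [h1, h2, Finset.sum_add_distrib]
          simp
        have h4 : (F.erase 0).sum (fun i => (i - 1) + 1) = (F.erase 0).sum id := by
          apply Finset.sum_congr rfl
          intro i hi
          have := Finset.mem_erase.mp hi
          simp only [id]
          omega
        have h5 : (F.erase 0).sum id ≤ F.sum id := Finset.sum_le_sum_of_subset (F.erase_subset 0)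
        omega
      rw [hset, volume_preimage_double, ih G hGm, hGcard]
      rw [← pow_succ']
      congr 1
      omega
    · -- `0 ∉ F`, `F` nonempty: all elements are positive
      set G := F.image (· - 1) with hG
      have hge1 : ∀ i ∈ F, 1 ≤ i := by
        intro i hi
        rcases Nat.eq_zero_or_pos i with rfl | h
        · exact absurd hi h0
        · exact h
      have hinj : Set.InjOn (· - 1) (F : Set ℕ) := by
        intro a ha b hb hab
        have := hge1 a ha
        have := hge1 b hb
        have hab' : a - 1 = b - 1 := hab
        omega
      have hGcard : G.card = F.card := by
        rw [hG, Finset.card_image_of_injOn hinj]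
      have hset : zeroDigitSet F =
          ((fun ω : ℝ => 2 * ω) ⁻¹' zeroDigitSet G) ∪
          ((fun ω : ℝ => 2 * ω - 1) ⁻¹' zeroDigitSet G) := by
        ext ω
        simp only [zeroDigitSet, Set.mem_setOf_eq, Set.mem_preimage, Set.mem_union, Set.mem_Ioc]
        constructor
        · rintro ⟨⟨hω0, hω1⟩, hd⟩
          have key : ∀ j ∈ G, dyadicDigit ω (j + 1) = 0 := by
            intro j hj
            obtain ⟨i, hi, rfl⟩ := Finset.mem_image.mp hj
            rw [show i - 1 + 1 = i by have := hge1 i hi; omega]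
            exact hd i hi
          by_cases hh : ω ≤ 1 / 2
          · left
            refine ⟨⟨by linarith, by linarith⟩, ?_⟩
            intro j hj
            rw [dyadicDigit_double]
            exact key j hj
          · right
            refine ⟨⟨by linarith, by linarith⟩, ?_⟩
            intro j hj
            rw [dyadicDigit_double_sub]
            exact key j hj
        · rintro (⟨⟨hω0, hω1⟩, hd⟩ | ⟨⟨hω0, hω1⟩, hd⟩)
          · refine ⟨⟨by linarith, by linarith⟩, ?_⟩
            intro i hi
            have h1 := hge1 i hi
            have : i - 1 ∈ G := Finset.mem_image.mpr ⟨i, hi, rfl⟩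
            have hh := hd (i - 1) this
            rw [dyadicDigit_double, show i - 1 + 1 = i by omega] at hh
            exact hh
          · refine ⟨⟨by linarith, by linarith⟩, ?_⟩
            intro i hi
            have h1 := hge1 i hi
            have : i - 1 ∈ G := Finset.mem_image.mpr ⟨i, hi, rfl⟩
            have hh := hd (i - 1) this
            rw [dyadicDigit_double_sub, show i - 1 + 1 = i by omega] at hh
            exact hh
      have hdisj : Disjoint ((fun ω : ℝ => 2 * ω) ⁻¹' zeroDigitSet G)
          ((fun ω : ℝ => 2 * ω - 1) ⁻¹' zeroDigitSet G) := by
        rw [Set.disjoint_left]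
        intro ω h1 h2
        have a1 : 2 * ω ≤ 1 := h1.1.2
        have a2 : 0 < 2 * ω - 1 := h2.1.1
        linarith
      have hGm : G.sum id + G.card ≤ n := by
        have h1 : G.sum id = F.sum (fun i => i - 1) := by
          rw [hG]; exact Finset.sum_image (fun a ha b hb h => hinj ha hb h)
        have h3 : G.sum id + G.card = F.sum (fun i => (i - 1) + 1) := by
          rw [h1, hGcard, Finset.sum_add_distrib]
          simp
        have h4 : F.sum (fun i => (i - 1) + 1) = F.sum id := by
          apply Finset.sum_congr rfl
          intro i hi
          have := hge1 i hi
          simp only [id]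
          omega
        omega
      have hm2 : MeasurableSet ((fun ω : ℝ => 2 * ω - 1) ⁻¹' zeroDigitSet G) :=
        ((measurable_const_mul 2).sub measurable_const) (measurableSet_zeroDigitSet G)
      rw [hset, measure_union hdisj hm2, volume_preimage_double, volume_preimage_double_sub,
        ih G hGm, hGcard, ← add_mul, ENNReal.inv_two_add_inv_two, one_mul]

/-- For any infinite `S ⊆ ℕ`, almost every `ω ∈ (0,1]` keeps infinitely many indices of `S`. -/
lemma volume_keepSet_inter_finite {S : Set ℕ} (hS : S.Infinite) :
    volume {ω : ℝ | ω ∈ Set.Ioc (0 : ℝ) 1 ∧ (keepSet ω ∩ S).Finite} = 0 := by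
  have hsub : {ω : ℝ | ω ∈ Set.Ioc (0 : ℝ) 1 ∧ (keepSet ω ∩ S).Finite} ⊆
      ⋃ N : ℕ, {ω : ℝ | ω ∈ Set.Ioc (0 : ℝ) 1 ∧ ∀ n ∈ S, N ≤ n → dyadicDigit ω n = 0} := by
    rintro ω ⟨hω, hfin⟩
    obtain ⟨N, hN⟩ := hfin.bddAbove
    refine Set.mem_iUnion.mpr ⟨N + 1, hω, ?_⟩
    intro n hn hNn
    rcases dyadicDigit_zero_or_one ω n with h | h
    · exact h
    · exfalso
      have : n ∈ keepSet ω ∩ S := ⟨h, hn⟩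
      have := hN this
      omega
  refine measure_mono_null hsub (measure_iUnion_null fun N => ?_)
  have hbound : ∀ k : ℕ, volume {ω : ℝ | ω ∈ Set.Ioc (0 : ℝ) 1 ∧
      ∀ n ∈ S, N ≤ n → dyadicDigit ω n = 0} ≤ (2 : ℝ≥0∞)⁻¹ ^ k := by
    intro k
    have hinf : (S \ Set.Iio N).Infinite := hS.diff (Set.finite_Iio N)
    obtain ⟨t, hts, htfin, htcard⟩ := hinf.exists_subset_ncard_eq k
    have hsub2 : {ω : ℝ | ω ∈ Set.Ioc (0 : ℝ) 1 ∧ ∀ n ∈ S, N ≤ n → dyadicDigit ω n = 0}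
        ⊆ zeroDigitSet htfin.toFinset := by
      rintro ω ⟨hω, hd⟩
      refine ⟨hω, ?_⟩
      intro i hi
      rw [Set.Finite.mem_toFinset] at hi
      obtain ⟨hiS, hiN⟩ := hts hi
      exact hd i hiS (by simpa using hiN)
    calc volume _ ≤ volume (zeroDigitSet htfin.toFinset) := measure_mono hsub2
      _ = (2 : ℝ≥0∞)⁻¹ ^ htfin.toFinset.card := volume_zeroDigitSet _
      _ = (2 : ℝ≥0∞)⁻¹ ^ k := by
          rw [show htfin.toFinset.card = t.ncard from (Set.ncard_eq_toFinset_card t htfin).symm,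
            htcard]
  have htend : Tendsto (fun k : ℕ => (2 : ℝ≥0∞)⁻¹ ^ k) atTop (𝓝 0) :=
    ENNReal.tendsto_pow_atTop_nhds_zero_of_lt_one (by
      rw [ENNReal.inv_lt_one]; exact ENNReal.one_lt_two)
  have := ge_of_tendsto' htend hbound
  simpa using this

/-- Key pointwise lemma: if `keepSet ω` is infinite and keeps infinitely many indices of
every relevant ball's index set, then the cluster points agree. -/
lemma clusterPts_eq_of_good {M : Type*} [MetricSpace M] (x : ℕ → M) (D : Set M)
    (hDd : Dense D) (ω : ℝ) (hkinf : (keepSet ω).Infinite)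
    (hgood : ∀ d ∈ D, ∀ k : ℕ, {n | x n ∈ Metric.ball d (1 / (k + 1))}.Infinite →
      (keepSet ω ∩ {n | x n ∈ Metric.ball d (1 / (k + 1))}).Infinite) :
    clusterPts {S : Set ℕ | S.Finite} x = clusterPts {S : Set ℕ | S.Finite} (subseq x ω) := by
  classical
  set p : ℕ → Prop := (· ∈ keepSet ω) with hp
  have hsetp : setOf p = keepSet ω := rfl
  have hpinf : (setOf p).Infinite := by rwa [hsetp]
  apply Set.Subset.antisymm
  · -- ordinary cluster points are cluster points of the subsequence
    intro l hl U hU hfin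
    obtain ⟨ε, hε, hball⟩ := Metric.mem_nhds_iff.mp hU
    obtain ⟨k, hk⟩ := exists_nat_one_div_lt (half_pos hε)
    obtain ⟨d, hdD, hdl⟩ := hDd.exists_dist_lt l (show (0:ℝ) < 1 / (k + 1) by positivity)
    set r : ℝ := 1 / (k + 1) with hr
    have hlmem : l ∈ Metric.ball d r := by
      rw [Metric.mem_ball]
      exact hdl
    have hnhds : Metric.ball d r ∈ 𝓝 l := Metric.isOpen_ball.mem_nhds hlmem
    have hSinf : {n | x n ∈ Metric.ball d r}.Infinite := hl _ hnhds
    have hKS : (keepSet ω ∩ {n | x n ∈ Metric.ball d r}).Infinite := hgood d hdD k hSinf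
    have hinj : Set.InjOn (Nat.count p) (keepSet ω ∩ {n | x n ∈ Metric.ball d r}) := by
      intro a ha b hb hab
      have h1 : Nat.nth p (Nat.count p a) = a := Nat.nth_count ha.1
      have h2 : Nat.nth p (Nat.count p b) = b := Nat.nth_count hb.1
      rw [← h1, ← h2, hab]
    have hTsub : Nat.count p '' (keepSet ω ∩ {n | x n ∈ Metric.ball d r}) ⊆
        {m | subseq x ω m ∈ U} := by
      rintro m ⟨n, ⟨hnp, hnS⟩, rfl⟩
      have : subseq x ω (Nat.count p n) = x n := by
        unfold subseq enumOf
        rw [show Nat.nth (· ∈ keepSet ω) = Nat.nth p from rfl, Nat.nth_count hnp]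
      rw [Set.mem_setOf_eq, this]
      apply hball
      rw [Metric.mem_ball]
      have h1 : dist (x n) d < r := Metric.mem_ball.mp hnS
      calc dist (x n) l ≤ dist (x n) d + dist d l := dist_triangle _ _ _
        _ < r + r := by rw [dist_comm d l]; exact add_lt_add h1 hdl
        _ ≤ ε := by rw [hr]; linarith
    exact ((hKS.image hinj).mono hTsub) hfin
  · -- cluster points of the subsequence are ordinary cluster points
    intro l hl U hU hfin
    apply hl U hU
    have hsub : {m | subseq x ω m ∈ U} ⊆ Nat.nth p ⁻¹' {n | x n ∈ U} := fun m hm => hm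
    exact (hfin.preimage (Nat.nth_injective hpinf).injOn).subset hsub

end AuxDyadic


/-- For a sequence `x` in a separable metric space, the ordinary limit points of `x`
coincide with the ordinary limit points of almost all of its subsequences
(`Fin`-cluster points are exactly ordinary limit points). -/
theorem stmt11 {M : Type*} [MetricSpace M] [TopologicalSpace.SeparableSpace M] (x : ℕ → M) :
    volume {ω : ℝ | ω ∈ Set.Ioc (0 : ℝ) 1 ∧
      clusterPts {S : Set ℕ | S.Finite} x = clusterPts {S : Set ℕ | S.Finite} (subseq x ω)} = 1 := by
  classical
  obtain ⟨D, hDc, hDd⟩ := TopologicalSpace.exists_countable_dense M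
  set Sb : M → ℕ → Set ℕ := fun d k => {n | x n ∈ Metric.ball d (1 / (k + 1))} with hSb
  set C : M × ℕ → Set ℝ := fun q =>
    {ω : ℝ | ω ∈ Set.Ioc (0:ℝ) 1 ∧ (Sb q.1 q.2).Infinite ∧ (keepSet ω ∩ Sb q.1 q.2).Finite}
    with hC
  have hCnull : ∀ q, volume (C q) = 0 := by
    intro q
    by_cases h : (Sb q.1 q.2).Infinite
    · refine measure_mono_null ?_ (volume_keepSet_inter_finite h)
      rintro ω ⟨h1, _, h3⟩
      exact ⟨h1, h3⟩
    · have : C q = ∅ := by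
        ext ω
        simp only [hC, Set.mem_setOf_eq, Set.mem_empty_iff_false, iff_false, not_and]
        intro _ h2
        exact absurd h2 h
      rw [this, measure_empty]
  set N0 : Set ℝ := {ω : ℝ | ω ∈ Set.Ioc (0:ℝ) 1 ∧ (keepSet ω).Finite} with hN0def
  have hN0 : volume N0 = 0 := by
    have := volume_keepSet_inter_finite (Set.infinite_univ (α := ℕ))
    simpa [Set.inter_univ, hN0def] using this
  have : Countable ↥D := hDc.to_subtype
  set Nbad : Set ℝ := N0 ∪ ⋃ q : ↥D × ℕ, C (q.1.1, q.2) with hNbaddef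
  have hNbad : volume Nbad = 0 :=
    measure_union_null hN0 (measure_iUnion_null fun q => hCnull _)
  have hgood : volume (Set.Ioc (0:ℝ) 1 \ Nbad) = 1 := by
    rw [measure_diff_null hNbad, Real.volume_Ioc]
    norm_num
  have hsub : Set.Ioc (0:ℝ) 1 \ Nbad ⊆ {ω : ℝ | ω ∈ Set.Ioc (0 : ℝ) 1 ∧
      clusterPts {S : Set ℕ | S.Finite} x
        = clusterPts {S : Set ℕ | S.Finite} (subseq x ω)} := by
    rintro ω ⟨hω, hbad⟩
    rw [hNbaddef, Set.mem_union, not_or] at hbad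
    obtain ⟨hb1, hb2⟩ := hbad
    have hkinf : (keepSet ω).Infinite := by
      by_contra h
      exact hb1 ⟨hω, Set.not_infinite.mp h⟩
    refine ⟨hω, clusterPts_eq_of_good x D hDd ω hkinf ?_⟩
    intro d hdD k hSinf
    by_contra h
    apply hb2
    exact Set.mem_iUnion.mpr ⟨(⟨d, hdD⟩, k), hω, hSinf, Set.not_infinite.mp h⟩
  refine le_antisymm ?_ ?_
  · calc volume _ ≤ volume (Set.Ioc (0:ℝ) 1) := measure_mono (fun ω h => h.1)
      _ = 1 := by rw [Real.volume_Ioc]; norm_num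
  · calc (1:ℝ≥0∞) = volume (Set.Ioc (0:ℝ) 1 \ Nbad) := hgood.symm
      _ ≤ _ := measure_mono hsub
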